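/- Let B be a normed vector space, T > 0, and let ξ, η : [0,T] → B be continuous. For N > 0 define the hitting time τ_N^ξ = inf{ t ∈ [0,T] : ‖ξ(t)‖ ≥ N } (with inf ∅ = +∞ and the convention t ∧ (+∞) = t). Then for all real numbers N ≥ R > 0 and every t ∈ [0,T]: | min( sup_{s∈[0,t]} ‖ξ(s)‖ , R ) − min( sup_{s∈[0,t]} ‖η(s)‖ , R ) | ≤ sup_{s ∈ [0, T ∧ τ_N^ξ ∧ τ_N^η]} ‖ξ(s) − η(s)‖. -/
import Mathlib


noncomputable section
open Set

/-- The stopped time `T ∧ τ_N^ξ ∧ τ_N^η`, where `τ_N^ξ = inf{ t ∈ [0,T] : ‖ξ(t)‖ ≥ N }`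
(with `inf ∅ = +∞` and `t ∧ (+∞) = t`); adjoining `T` to the set encodes these
conventions. -/
def stopTime {B : Type*} [NormedAddCommGroup B] (T N : ℝ) (ξ η : ℝ → B) : ℝ :=
  sInf ({t | t ∈ Set.Icc 0 T ∧ (N ≤ ‖ξ t‖ ∨ N ≤ ‖η t‖)} ∪ {T})

private lemma min_aux {a b R D : ℝ} (hD : 0 ≤ D) (h : a ≤ b + D) :
    min a R ≤ min b R + D := by
  rcases le_total b R with h' | h'
  · have h1 := min_le_left a R
    have hb : min b R = b := min_eq_left h'
    linarith
  · have h1 := min_le_right a R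
    have hb : min b R = R := min_eq_right h'
    linarith

/-- Let `B` be a normed vector space, `T > 0`, and `ξ, η : [0,T] → B`
continuous. For all `N ≥ R > 0` and `t ∈ [0,T]`,
`|min(sup_{s∈[0,t]}‖ξ(s)‖, R) − min(sup_{s∈[0,t]}‖η(s)‖, R)|
  ≤ sup_{s∈[0, T ∧ τ_N^ξ ∧ τ_N^η]} ‖ξ(s) − η(s)‖`. -/
theorem statement14 {B : Type*} [NormedAddCommGroup B] [NormedSpace ℝ B]
    (T : ℝ) (hT : 0 < T) (ξ η : ℝ → B)
    (hξ : ContinuousOn ξ (Set.Icc 0 T)) (hη : ContinuousOn η (Set.Icc 0 T)) :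
    ∀ N R : ℝ, 0 < R → R ≤ N → ∀ t ∈ Set.Icc (0 : ℝ) T,
      |min (sSup ((fun u => ‖ξ u‖) '' Set.Icc 0 t)) R -
          min (sSup ((fun u => ‖η u‖) '' Set.Icc 0 t)) R| ≤
        sSup ((fun u => ‖ξ u - η u‖) '' Set.Icc 0 (stopTime T N ξ η)) := by
  intro N R hR hRN t ht
  set τ := stopTime T N ξ η with hτdef
  set S : Set ℝ := {t | t ∈ Set.Icc 0 T ∧ (N ≤ ‖ξ t‖ ∨ N ≤ ‖η t‖)} ∪ {T} with hSdef
  have hτS' : τ = sInf S := rfl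
  have hTmem : T ∈ S := Or.inr rfl
  have hSsub : S ⊆ Set.Icc 0 T := by
    rintro x (hx | hx)
    · exact hx.1
    · rw [Set.mem_singleton_iff] at hx; exact ⟨hx ▸ hT.le, hx.le⟩
  have hSne : S.Nonempty := ⟨T, hTmem⟩
  have hSbdd : BddBelow S := ⟨0, fun x hx => (hSsub hx).1⟩
  have hτ0 : 0 ≤ τ := by rw [hτS']; exact le_csInf hSne fun x hx => (hSsub hx).1
  have hτT : τ ≤ T := by rw [hτS']; exact csInf_le hSbdd hTmem
  have hSclosed : IsClosed S := by
    have h1 : IsClosed (Set.Icc (0:ℝ) T ∩ (fun u => ‖ξ u‖) ⁻¹' Set.Ici N) :=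
      hξ.norm.preimage_isClosed_of_isClosed isClosed_Icc isClosed_Ici
    have h2 : IsClosed (Set.Icc (0:ℝ) T ∩ (fun u => ‖η u‖) ⁻¹' Set.Ici N) :=
      hη.norm.preimage_isClosed_of_isClosed isClosed_Icc isClosed_Ici
    have heq : S = ((Set.Icc (0:ℝ) T ∩ (fun u => ‖ξ u‖) ⁻¹' Set.Ici N) ∪
        (Set.Icc (0:ℝ) T ∩ (fun u => ‖η u‖) ⁻¹' Set.Ici N)) ∪ {T} := by
      ext x
      simp only [hSdef, Set.mem_union, Set.mem_setOf_eq, Set.mem_inter_iff, Set.mem_preimage,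
        Set.mem_Ici]
      tauto
    rw [heq]
    exact (h1.union h2).union isClosed_singleton
  have hτS : τ ∈ S := by rw [hτS']; exact hSclosed.csInf_mem hSne hSbdd
  set D := sSup ((fun u => ‖ξ u - η u‖) '' Set.Icc 0 τ) with hDdef
  have hIccτ : Set.Icc (0:ℝ) τ ⊆ Set.Icc 0 T := Set.Icc_subset_Icc_right hτT
  have hDbdd : BddAbove ((fun u => ‖ξ u - η u‖) '' Set.Icc 0 τ) :=
    isCompact_Icc.bddAbove_image (((hξ.mono hIccτ).sub (hη.mono hIccτ)).norm)
  have hDle : ∀ s ∈ Set.Icc (0:ℝ) τ, ‖ξ s - η s‖ ≤ D := fun s hs =>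
    le_csSup hDbdd ⟨s, hs, rfl⟩
  have hD0 : 0 ≤ D := le_trans (norm_nonneg _) (hDle 0 ⟨le_refl 0, hτ0⟩)
  set Mξ := sSup ((fun u => ‖ξ u‖) '' Set.Icc 0 t) with hMξdef
  set Mη := sSup ((fun u => ‖η u‖) '' Set.Icc 0 t) with hMηdef
  have hIcct : Set.Icc (0:ℝ) t ⊆ Set.Icc 0 T := Set.Icc_subset_Icc_right ht.2
  have hMξbdd : BddAbove ((fun u => ‖ξ u‖) '' Set.Icc 0 t) :=
    isCompact_Icc.bddAbove_image ((hξ.mono hIcct).norm)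
  have hMηbdd : BddAbove ((fun u => ‖η u‖) '' Set.Icc 0 t) :=
    isCompact_Icc.bddAbove_image ((hη.mono hIcct).norm)
  have htne : (Set.Icc (0:ℝ) t).Nonempty := Set.nonempty_Icc.mpr ht.1
  have hMξle : ∀ s ∈ Set.Icc (0:ℝ) t, ‖ξ s‖ ≤ Mξ := fun s hs => le_csSup hMξbdd ⟨s, hs, rfl⟩
  have hMηle : ∀ s ∈ Set.Icc (0:ℝ) t, ‖η s‖ ≤ Mη := fun s hs => le_csSup hMηbdd ⟨s, hs, rfl⟩
  rcases le_or_gt t τ with hcase | hcase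
  · -- case t ≤ τ
    have hsub : Set.Icc (0:ℝ) t ⊆ Set.Icc 0 τ := Set.Icc_subset_Icc_right hcase
    have h1 : Mξ ≤ Mη + D := by
      apply csSup_le (htne.image _)
      rintro x ⟨s, hs, rfl⟩
      have h := norm_sub_norm_le (ξ s) (η s)
      have h2 := hMηle s hs
      have h3 := hDle s (hsub hs)
      linarith
    have h2 : Mη ≤ Mξ + D := by
      apply csSup_le (htne.image _)
      rintro x ⟨s, hs, rfl⟩
      have h := norm_sub_norm_le (η s) (ξ s)
      rw [norm_sub_rev] at h
      have h2 := hMξle s hs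
      have h3 := hDle s (hsub hs)
      linarith
    rw [abs_le]
    constructor
    · have := min_aux (R := R) hD0 h2; linarith
    · have := min_aux (R := R) hD0 h1; linarith
  · -- case τ < t
    have hτt : τ ∈ Set.Icc (0:ℝ) t := ⟨hτ0, hcase.le⟩
    have hd := hDle τ ⟨hτ0, le_refl τ⟩
    have hMξτ := hMξle τ hτt
    have hMητ := hMηle τ hτt
    have hmain : R - D ≤ Mξ ∧ R - D ≤ Mη := by
      rcases hτS with ⟨_, hN | hN⟩ | hτeq
      · have h1 : R ≤ Mξ := le_trans hRN (le_trans hN hMξτ)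
        have h2 : ‖ξ τ‖ - ‖η τ‖ ≤ D := le_trans (norm_sub_norm_le _ _) hd
        constructor <;> linarith
      · have h1 : R ≤ Mη := le_trans hRN (le_trans hN hMητ)
        have h2 : ‖η τ‖ - ‖ξ τ‖ ≤ D := by
          have h := norm_sub_norm_le (η τ) (ξ τ)
          rw [norm_sub_rev] at h
          linarith
        constructor <;> linarith
      · rw [Set.mem_singleton_iff] at hτeq
        exfalso
        have := ht.2
        linarith [hcase, hτeq ▸ hcase]
    have hξlo : R - D ≤ min Mξ R := le_min hmain.1 (by linarith)
    have hηlo : R - D ≤ min Mη R := le_min hmain.2 (by linarith)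
    have hξhi : min Mξ R ≤ R := min_le_right _ _
    have hηhi : min Mη R ≤ R := min_le_right _ _
    rw [abs_le]
    constructor <;> linarith
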